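/- Let L be a split regular Hom-Lie superalgebra. For any α ∈ Λ and any integers z_1, z_2 ∈ Z, the root α∘φ^{z_1} is connected to α∘φ^{z_2}; moreover if −α ∈ Λ, then α∘φ^{z_1} is also connected to −α∘φ^{z_2}. -/

import Mathlib

/-- The super sign `(-1)^{ij}` for `i j : ZMod 2`, valued in a field `K`. -/
def ssign (K : Type*) [Field K] (i j : ZMod 2) : K :=
  if i = 1 ∧ j = 1 then -1 else 1

/-- A split regular Hom-Lie superalgebra over a field `K`:
a `ZMod 2`-graded vector space `L` with a bilinear bracket and an even
automorphism `φ` satisfying skew-supersymmetry and the super Hom-Jacobi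
identity, together with a maximal abelian graded subalgebra `H`
(with respect to which `L` will be split). -/
structure SplitRegularHomLieSuperalgebra (K L : Type*) [Field K]
    [AddCommGroup L] [Module K L] where
  bracket : L →ₗ[K] L →ₗ[K] L
  φ : L ≃ₗ[K] L
  Lg : ZMod 2 → Submodule K L
  grading_sup : Lg 0 ⊔ Lg 1 = ⊤
  grading_disjoint : Lg 0 ⊓ Lg 1 = ⊥
  φ_even : ∀ i, Submodule.map (φ : L →ₗ[K] L) (Lg i) = Lg i
  φ_bracket : ∀ x y, φ (bracket x y) = bracket (φ x) (φ y)
  skew : ∀ (i j : ZMod 2), ∀ x ∈ Lg i, ∀ y ∈ Lg j,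
    bracket x y = -(ssign K i j) • bracket y x
  jacobi : ∀ (i j k : ZMod 2), ∀ x ∈ Lg i, ∀ y ∈ Lg j, ∀ z ∈ Lg k,
    ssign K i k • bracket (bracket x y) (φ z)
      + ssign K i j • bracket (bracket y z) (φ x)
      + ssign K j k • bracket (bracket z x) (φ y) = 0
  H : Submodule K L
  H_graded : H = (H ⊓ Lg 0) ⊔ (H ⊓ Lg 1)
  H_abelian : ∀ x ∈ H, ∀ y ∈ H, bracket x y = 0
  φ_H : Submodule.map (φ : L →ₗ[K] L) H = H
  H_max : ∀ A : Submodule K L, (A = (A ⊓ Lg 0) ⊔ (A ⊓ Lg 1)) →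
    (∀ x ∈ A, ∀ y ∈ A, bracket x y = 0) →
    Submodule.map (φ : L →ₗ[K] L) A = A → H ≤ A → A = H
  /-- the restriction of `φ` to `H₀ = H ⊓ L₀` as a linear automorphism -/
  φH0 : ↥(H ⊓ Lg 0) ≃ₗ[K] ↥(H ⊓ Lg 0)
  φH0_coe : ∀ h : ↥(H ⊓ Lg 0), (φH0 h : L) = φ (h : L)

namespace SplitRegularHomLieSuperalgebra

variable {K L : Type*} [Field K] [AddCommGroup L] [Module K L]
variable (D : SplitRegularHomLieSuperalgebra K L)

/-- The even part `H₀` of `H`. -/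
abbrev H0 : Submodule K L := D.H ⊓ D.Lg 0

/-- The root space associated to a linear functional `α : H₀ → K`. -/
def rootSpace (α : ↥D.H0 →ₗ[K] K) : Submodule K L where
  carrier := {v | ∀ h : ↥D.H0, D.bracket h v = α h • D.φ v}
  add_mem' := by
    intro a b ha hb h
    simp only [map_add, ha h, hb h, smul_add]
  zero_mem' := by
    intro h
    simp
  smul_mem' := by
    intro c x hx h
    simp only [map_smul, hx h, smul_comm c (α h)]

/-- The root system: the set of nonzero functionals with nonzero root space. -/
def Λ : Set (↥D.H0 →ₗ[K] K) := {α | α ≠ 0 ∧ D.rootSpace α ≠ ⊥}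

/-- The twist `α ∘ φ^z` of a functional by an integer power of `φ` (restricted
to `H₀`). -/
def twist (α : ↥D.H0 →ₗ[K] K) (z : ℤ) : ↥D.H0 →ₗ[K] K :=
  α.comp ((D.φH0 ^ z : ↥D.H0 ≃ₗ[K] ↥D.H0) : ↥D.H0 →ₗ[K] ↥D.H0)

/-- The subspace spanned by all brackets `[a,b]` with `a ∈ A`, `b ∈ B`. -/
def bracketSpan (A B : Submodule K L) : Submodule K L :=
  Submodule.span K {z | ∃ a ∈ A, ∃ b ∈ B, z = D.bracket a b}

/-- `±Λ = Λ ∪ (−Λ)`. -/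
def pmΛ : Set (↥D.H0 →ₗ[K] K) := {γ | γ ∈ D.Λ ∨ -γ ∈ D.Λ}

/-- The partial sums appearing in the definition of a connection:
`theta a 0 = a 0` and `theta a (i+1) = (theta a i + a (i+1)) ∘ φ⁻¹`. -/
def theta (a : ℕ → (↥D.H0 →ₗ[K] K)) : ℕ → (↥D.H0 →ₗ[K] K)
  | 0 => a 0
  | i + 1 => D.twist (theta a i + a (i + 1)) (-1)

/-- `α` is connected to `β`. -/
def Connected (α β : ↥D.H0 →ₗ[K] K) : Prop :=
  ∃ (k : ℕ) (a : ℕ → (↥D.H0 →ₗ[K] K)), 1 ≤ k ∧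
    (∀ i < k, a i ∈ D.pmΛ) ∧
    (∃ n : ℕ, a 0 = D.twist α (-(n : ℤ))) ∧
    (∀ i, 1 ≤ i → i + 1 ≤ k - 1 → D.theta a i ∈ D.pmΛ) ∧
    (∃ m : ℕ, D.theta a (k - 1) = D.twist β (-(m : ℤ)) ∨
              D.theta a (k - 1) = -(D.twist β (-(m : ℤ))))

/-- The connection class `[α]` of a root `α`. -/
def rootClass (α : ↥D.H0 →ₗ[K] K) : Set (↥D.H0 →ₗ[K] K) :=
  {β ∈ D.Λ | D.Connected α β}

/-- `H_{[α]} = span {[L_β, L_{−β}] : β ∈ [α]}`. -/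
def Hclass (α : ↥D.H0 →ₗ[K] K) : Submodule K L :=
  ⨆ β ∈ D.rootClass α, D.bracketSpan (D.rootSpace β) (D.rootSpace (-β))

/-- `V_{[α]} = ⊕_{β ∈ [α]} L_β`. -/
def Vclass (α : ↥D.H0 →ₗ[K] K) : Submodule K L :=
  ⨆ β ∈ D.rootClass α, D.rootSpace β

/-- `L_{[α]} = H_{[α]} ⊕ V_{[α]}`. -/
def Lclass (α : ↥D.H0 →ₗ[K] K) : Submodule K L :=
  D.Hclass α ⊔ D.Vclass α

/-- The center `Z(L) = {v : [v, L] = 0}`. -/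
def center : Submodule K L where
  carrier := {v | ∀ y : L, D.bracket v y = 0}
  add_mem' := by
    intro a b ha hb y
    simp only [map_add, LinearMap.add_apply, ha y, hb y, add_zero]
  zero_mem' := by
    intro y
    simp
  smul_mem' := by
    intro c x hx y
    simp only [map_smul, LinearMap.smul_apply, hx y, smul_zero]

/-- An ideal: a graded, `φ`-invariant subspace `I` with `[I,L] ⊆ I`. -/
def IsIdeal (I : Submodule K L) : Prop :=
  (I = (I ⊓ D.Lg 0) ⊔ (I ⊓ D.Lg 1)) ∧
  (∀ x ∈ I, ∀ y : L, D.bracket x y ∈ I) ∧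
  Submodule.map (D.φ : L →ₗ[K] L) I = I

/-- Simplicity: `[L,L] ≠ 0` and the only ideals are `0` and `L`. -/
def IsSimple : Prop :=
  (¬ ∀ x y : L, D.bracket x y = 0) ∧
  ∀ I : Submodule K L, D.IsIdeal I → I = ⊥ ∨ I = ⊤

/-! ### Auxiliary lemmas for Statement 8 -/

lemma equiv_zpow_zpow {M : Type*} [AddCommGroup M] [Module K M]
    (e : M ≃ₗ[K] M) (z w : ℤ) (x : M) : (e ^ z) ((e ^ w) x) = (e ^ (z + w)) x := by
  rw [zpow_add]; rfl

lemma equiv_zpow_cancel {M : Type*} [AddCommGroup M] [Module K M]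
    (e : M ≃ₗ[K] M) (z : ℤ) (x : M) : (e ^ z) ((e ^ (-z)) x) = x := by
  rw [equiv_zpow_zpow, add_neg_cancel, zpow_zero]; rfl

lemma equiv_zpow_cancel' {M : Type*} [AddCommGroup M] [Module K M]
    (e : M ≃ₗ[K] M) (z : ℤ) (x : M) : (e ^ (-z)) ((e ^ z) x) = x := by
  rw [equiv_zpow_zpow, neg_add_cancel, zpow_zero]; rfl

lemma bracket_zpow (z : ℤ) : ∀ x y : L,
    (D.φ ^ z) (D.bracket x y) = D.bracket ((D.φ ^ z) x) ((D.φ ^ z) y) := by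
  induction z using Int.induction_on with
  | zero => intro x y; rw [zpow_zero]; rfl
  | succ n ih =>
      intro x y
      have h1 : ∀ v : L, (D.φ ^ ((n : ℤ) + 1)) v = (D.φ ^ (n : ℤ)) (D.φ v) := by
        intro v; rw [zpow_add_one]; rfl
      rw [h1, h1, h1, D.φ_bracket, ih]
  | pred n ih =>
      intro x y
      have h1 : ∀ v : L, (D.φ ^ (-(n : ℤ) - 1)) v = (D.φ ^ (-(n : ℤ))) (D.φ.symm v) := by
        intro v; rw [zpow_sub_one]; rfl
      have h2 : D.φ.symm (D.bracket x y) = D.bracket (D.φ.symm x) (D.φ.symm y) := by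
        apply D.φ.injective
        rw [D.φ_bracket]
        simp
      rw [h1, h1, h1, h2, ih]

lemma coeH0_zpow (z : ℤ) : ∀ h : ↥D.H0,
    (((D.φH0 ^ z) h : L)) = (D.φ ^ z) (h : L) := by
  induction z using Int.induction_on with
  | zero => intro h; rw [zpow_zero, zpow_zero]; rfl
  | succ n ih =>
      intro h
      have h1 : ((D.φH0 ^ ((n : ℤ) + 1)) h) = (D.φH0 ^ (n : ℤ)) (D.φH0 h) := by
        rw [zpow_add_one]; rfl
      have h2 : (D.φ ^ ((n : ℤ) + 1)) (h : L) = (D.φ ^ (n : ℤ)) (D.φ (h : L)) := by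
        rw [zpow_add_one]; rfl
      rw [h1, h2, ih, D.φH0_coe]
  | pred n ih =>
      intro h
      have h1 : ((D.φH0 ^ (-(n : ℤ) - 1)) h) = (D.φH0 ^ (-(n : ℤ))) (D.φH0.symm h) := by
        rw [zpow_sub_one]; rfl
      have h2 : (D.φ ^ (-(n : ℤ) - 1)) (h : L) = (D.φ ^ (-(n : ℤ))) (D.φ.symm (h : L)) := by
        rw [zpow_sub_one]; rfl
      have h3 : ((D.φH0.symm h : L)) = D.φ.symm (h : L) := by
        apply D.φ.injective
        rw [← D.φH0_coe, LinearEquiv.apply_symm_apply, LinearEquiv.apply_symm_apply]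
      rw [h1, h2, ih, h3]

lemma twist_apply (α : ↥D.H0 →ₗ[K] K) (z : ℤ) (h : ↥D.H0) :
    D.twist α z h = α ((D.φH0 ^ z) h) := rfl

lemma twist_twist (α : ↥D.H0 →ₗ[K] K) (z w : ℤ) :
    D.twist (D.twist α z) w = D.twist α (z + w) := by
  ext h
  simp only [twist_apply]
  rw [equiv_zpow_zpow]

lemma twist_neg (α : ↥D.H0 →ₗ[K] K) (z : ℤ) :
    D.twist (-α) z = -(D.twist α z) := by
  ext h
  simp [twist_apply]

lemma twist_mem_Λ (α : ↥D.H0 →ₗ[K] K) (hα : α ∈ D.Λ) (z : ℤ) :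
    D.twist α z ∈ D.Λ := by
  obtain ⟨hne, hsp⟩ := hα
  constructor
  · intro h0
    apply hne
    ext h
    have h1 : D.twist α z ((D.φH0 ^ (-z)) h) = 0 := by rw [h0]; rfl
    rw [twist_apply, equiv_zpow_cancel] at h1
    simpa using h1
  · rw [Submodule.ne_bot_iff] at hsp ⊢
    obtain ⟨v, hv, hv0⟩ := hsp
    refine ⟨(D.φ ^ (-z)) v, ?_, ?_⟩
    · intro h
      have hv' : ∀ h' : ↥D.H0, D.bracket (h' : L) v = α h' • D.φ v := hv
      set h' : ↥D.H0 := (D.φH0 ^ z) h with hh'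
      have e1 : D.bracket (h : L) ((D.φ ^ (-z)) v)
          = (D.φ ^ (-z)) (D.bracket ((D.φ ^ z) (h : L)) v) := by
        rw [D.bracket_zpow, equiv_zpow_cancel']
      have e2 : D.bracket ((D.φ ^ z) (h : L)) v = α h' • D.φ v := by
        rw [← D.coeH0_zpow]
        exact hv' h'
      have e3 : (D.φ ^ (-z)) (D.φ v) = D.φ ((D.φ ^ (-z)) v) := by
        have : (D.φ ^ (-z)) (D.φ v) = (D.φ ^ (-z)) ((D.φ ^ (1 : ℤ)) v) := by
          rw [zpow_one]
        rw [this, equiv_zpow_zpow]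
        have : (-z + 1) = 1 + -z := by ring
        rw [this, ← equiv_zpow_zpow, zpow_one]
      rw [e1, e2, map_smul, e3]
      rfl
    · simpa using hv0

end SplitRegularHomLieSuperalgebra

/-- The split condition: `L = H ⊕ (⊕_{α ∈ Λ} L_α)` as an internal direct sum. -/
structure IsSplitDecomposition {K L : Type*} [Field K] [AddCommGroup L]
    [Module K L] (D : SplitRegularHomLieSuperalgebra K L) : Prop where
  sup_eq_top : D.H ⊔ (⨆ α ∈ D.Λ, D.rootSpace α) = ⊤
  disjoint_H : Disjoint D.H (⨆ α ∈ D.Λ, D.rootSpace α)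
  disjoint_root : ∀ α ∈ D.Λ, Disjoint (D.rootSpace α)
    (D.H ⊔ ⨆ β ∈ {β ∈ D.Λ | β ≠ α}, D.rootSpace β)

/-- for `α ∈ Λ`, `α∘φ^{z₁}` is connected to `α∘φ^{z₂}`, and also to
`−α∘φ^{z₂}` whenever `−α ∈ Λ`. -/
theorem stmt_8 {K L : Type*} [Field K] [AddCommGroup L] [Module K L]
    (D : SplitRegularHomLieSuperalgebra K L) (hsplit : IsSplitDecomposition D)
    (α : ↥D.H0 →ₗ[K] K) (hα : α ∈ D.Λ) (z₁ z₂ : ℤ) :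
    D.Connected (D.twist α z₁) (D.twist α z₂) ∧
    (-α ∈ D.Λ → D.Connected (D.twist α z₁) (-(D.twist α z₂))) := by
  set n : ℕ := (z₁ - z₂).toNat with hn
  set m : ℕ := (z₂ - z₁).toNat with hm
  have hz : z₁ + -(n : ℤ) = z₂ + -(m : ℤ) := by omega
  set a : ℕ → (↥D.H0 →ₗ[K] K) := fun _ => D.twist α (z₁ + -(n : ℤ)) with haa
  have ha0 : a 0 = D.twist (D.twist α z₁) (-(n : ℤ)) := (D.twist_twist α z₁ _).symm
  have htheta : D.theta a 0 = a 0 := rfl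
  have hfin : D.theta a 0 = D.twist (D.twist α z₂) (-(m : ℤ)) := by
    rw [htheta, haa, D.twist_twist, ← hz]
  constructor
  · refine ⟨1, a, le_refl 1, ?_, ⟨n, ha0⟩, ?_, ⟨m, Or.inl hfin⟩⟩
    · intro i _
      exact Or.inl (D.twist_mem_Λ α hα _)
    · intro i h1 h2
      omega
  · intro hneg
    refine ⟨1, a, le_refl 1, ?_, ⟨n, ha0⟩, ?_, ⟨m, Or.inr ?_⟩⟩
    · intro i _
      exact Or.inl (D.twist_mem_Λ α hα _)
    · intro i h1 h2
      omega
    · rw [D.twist_neg, neg_neg]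
      exact hfin
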